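/- Let C^2 be the ℝ-span of vertical vector fields R(X,Y) on the indicatrix bundle of a Landsberg space (X, Y ∈ 𝔛(M)), and inductively let C^k be the ℝ-span of elements of C^{k−1} together with fields ∇_X V for X ∈ 𝔛(M), V ∈ C^{k−1}. Then: (1) each C^k is a C^∞(M)-module; (2) [C^k, C^l] ⊂ C^{k+l}; (3) for m = 0, 1, 2, …, the quotient C^{m+2}/C^{m+1} is spanned by equivalence classes of fields of the form ∇_{X_1}∇_{X_2}⋯∇_{X_m}(R(Y,Z)) for vector fields X_1, …, X_m, Y, Z on M (with C^1 = {0}). -/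

import Mathlib

structure BaseManifold : Type 1 where
  M : Type
  [topM : TopologicalSpace M]
  Cf : Type
  [cfRing : CommRing Cf]
  [cfAlg : Algebra ℝ Cf]
  evalCf : Cf → M → ℝ
  VF : Type
  [vfGrp : AddCommGroup VF]
  [vfModR : Module ℝ VF]
  [vfModC : Module Cf VF]
  [vfTower : IsScalarTower ℝ Cf VF]
  bracket : VF → VF → VF
  bracket_add_left : ∀ X Y Z, bracket (X + Y) Z = bracket X Z + bracket Y Z
  bracket_add_right : ∀ X Y Z, bracket X (Y + Z) = bracket X Y + bracket X Z
  actF : VF → Cf → Cf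
  actF_zero : ∀ f, actF 0 f = 0
  T : M → Type
  [tGrp : ∀ x, AddCommGroup (T x)]
  [tModR : ∀ x, Module ℝ (T x)]
  evalVF : VF → ∀ x, T x
  evalVF_zero : ∀ x, evalVF 0 x = 0
  Curve : M → M → Type

attribute [instance] BaseManifold.topM BaseManifold.cfRing BaseManifold.cfAlg
  BaseManifold.vfGrp BaseManifold.vfModR BaseManifold.vfModC BaseManifold.vfTower
  BaseManifold.tGrp BaseManifold.tModR

structure VecBundle (B : BaseManifold) : Type 1 where
  Fib : B.M → Type
  [fibGrp : ∀ x, AddCommGroup (Fib x)]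
  [fibMod : ∀ x, Module ℝ (Fib x)]
  Sec : Type
  [secGrp : AddCommGroup Sec]
  [secModR : Module ℝ Sec]
  [secModC : Module B.Cf Sec]
  [secTower : IsScalarTower ℝ B.Cf Sec]
  evalSec : ∀ x, Sec →ₗ[ℝ] Fib x
  evalSec_smulC : ∀ (f : B.Cf) (s : Sec) (x : B.M),
    evalSec x (f • s) = B.evalCf f x • evalSec x s

attribute [instance] VecBundle.fibGrp VecBundle.fibMod VecBundle.secGrp
  VecBundle.secModR VecBundle.secModC VecBundle.secTower

structure LinConnection (B : BaseManifold) (V : VecBundle B) where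
  cov : B.VF → V.Sec → V.Sec
  cov_addX : ∀ X Y s, cov (X + Y) s = cov X s + cov Y s
  cov_smulX : ∀ (f : B.Cf) X s, cov (f • X) s = f • cov X s
  cov_addS : ∀ X s t, cov X (s + t) = cov X s + cov X t
  cov_leibniz : ∀ X (f : B.Cf) s, cov X (f • s) = f • cov X s + (B.actF X f) • s
  tau : ∀ {x y : B.M}, B.Curve x y → (V.Fib x ≃ₗ[ℝ] V.Fib y)
  parallel_iff : ∀ s : V.Sec,
    (∀ X, cov X s = 0) ↔
      ∀ (x y : B.M) (c : B.Curve x y), tau c (V.evalSec x s) = V.evalSec y s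

/-- An abstract Landsberg space over the base `B`: the indicatrix bundle `𝕀` of a
Finsler space, presented through the algebra `CfI` of smooth functions on `𝕀`
(with the pull-back `π^*` of functions on `M`), the Lie algebra `Vert` of vertical
vector fields on `𝕀` (acting on functions as derivations), the operator
`∇_X V = [X^H, V]` determined by the canonical horizontal distribution (with `X^H`
the horizontal lift of `X`, acting on functions by `actH`), the fibre metric `g`
induced by the fundamental tensor, and the curvature `R` of the horizontal
distribution.  The Landsberg property is `L_{X^H} g = 0`, encoded by the field
`landsberg`. -/
structure LandsbergSetting (B : BaseManifold) : Type 1 where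
  /-- smooth functions on the indicatrix bundle `𝕀` -/
  CfI : Type
  [cfIRing : CommRing CfI]
  [cfIAlg : Algebra ℝ CfI]
  /-- pull-back `π^* : C^∞(M) → C^∞(𝕀)` -/
  pull : B.Cf →ₐ[ℝ] CfI
  /-- vertical vector fields on `𝕀` -/
  Vert : Type
  [vGrp : AddCommGroup Vert]
  [vModR : Module ℝ Vert]
  [vModC : Module CfI Vert]
  [vTower : IsScalarTower ℝ CfI Vert]
  /-- the bracket of vertical vector fields (vertical fields are closed under bracket) -/
  brV : Vert → Vert → Vert
  brV_add_left : ∀ V W U, brV (V + W) U = brV V U + brV W U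
  brV_add_right : ∀ V W U, brV V (W + U) = brV V W + brV V U
  brV_skew : ∀ V W, brV V W = - brV W V
  brV_jacobi : ∀ V W U, brV V (brV W U) = brV (brV V W) U + brV W (brV V U)
  /-- the action of a vertical vector field on functions on `𝕀`, as a derivation -/
  actV : Vert → CfI → CfI
  actV_add : ∀ V f g, actV V (f + g) = actV V f + actV V g
  actV_mul : ∀ V f g, actV V (f * g) = f * actV V g + g * actV V f
  actV_brV : ∀ V W f, actV (brV V W) f = actV V (actV W f) - actV W (actV V f)
  /-- the action of the horizontal lift `X^H` on functions on `𝕀` -/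
  actH : B.VF → CfI → CfI
  actH_add : ∀ X f g, actH X (f + g) = actH X f + actH X g
  actH_mul : ∀ X f g, actH X (f * g) = f * actH X g + g * actH X f
  actH_pull : ∀ X f, actH X (pull f) = pull (B.actF X f)
  /-- the operator `∇_X V = [X^H, V]` on vertical vector fields -/
  nabla : B.VF → Vert → Vert
  nabla_addX : ∀ X Y V, nabla (X + Y) V = nabla X V + nabla Y V
  nabla_smulX : ∀ (f : B.Cf) X V, nabla (f • X) V = pull f • nabla X V
  nabla_addV : ∀ X V W, nabla X (V + W) = nabla X V + nabla X W
  nabla_leibniz : ∀ X (a : CfI) V, nabla X (a • V) = a • nabla X V + (actH X a) • V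
  /-- `∇_X` is a derivation of the bracket (Jacobi identity for `[X^H, ·]`) -/
  nabla_brV : ∀ X V W, nabla X (brV V W) = brV (nabla X V) W + brV V (nabla X W)
  /-- `∇_X V = [X^H, V]` acts on functions as the commutator of `X^H` and `V` -/
  actV_nabla : ∀ X V f, actV (nabla X V) f = actH X (actV V f) - actV V (actH X f)
  /-- the fibre metric on `𝕀` induced by the fundamental tensor -/
  g : Vert → Vert → CfI
  g_symm : ∀ V W, g V W = g W V
  g_add_left : ∀ V W U, g (V + W) U = g V U + g W U
  g_smul_left : ∀ (a : CfI) V W, g (a • V) W = a * g V W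
  /-- the Landsberg property: `L_{X^H} g = 0` for every vector field `X` on `M` -/
  landsberg : ∀ X V W, actH X (g V W) = g (nabla X V) W + g V (nabla X W)
  /-- the curvature of the canonical horizontal distribution, a vertical field -/
  R : B.VF → B.VF → Vert
  R_add_left : ∀ X X' Y, R (X + X') Y = R X Y + R X' Y
  R_skew : ∀ X Y, R X Y = - R Y X
  R_smul_left : ∀ (f : B.Cf) X Y, R (f • X) Y = pull f • R X Y
  /-- the curvature identity `∇_X∇_Y V − ∇_Y∇_X V − ∇_{[X,Y]} V = [V, R(X,Y)]` -/
  curvId : ∀ X Y V,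
    nabla X (nabla Y V) - nabla Y (nabla X V) - nabla (B.bracket X Y) V
      = brV V (R X Y)

attribute [instance] LandsbergSetting.cfIRing LandsbergSetting.cfIAlg
  LandsbergSetting.vGrp LandsbergSetting.vModR LandsbergSetting.vModC
  LandsbergSetting.vTower

/-- The sections of the Lie algebra bundle `K → M` of infinitesimal isometries of the
indicatrix fibres: the vertical vector fields whose fibrewise Lie derivative of the
fibre metric `g` vanishes. -/
def LandsbergSetting.SecK {B : BaseManifold} (L : LandsbergSetting B) : Set L.Vert :=
  {V | ∀ W U : L.Vert, L.actV V (L.g W U) = L.g (L.brV V W) U + L.g W (L.brV V U)}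

/-- The spaces `C^k` of vertical vector fields on the indicatrix bundle: `C^2` is the
`ℝ`-span of the curvature fields `R(X,Y)`, and `C^k` is spanned by `C^{k-1}` together
with the fields `∇_X V` with `V ∈ C^{k-1}` (`C^0 = C^1 = 0`). -/
def Ck {B : BaseManifold} (L : LandsbergSetting B) : ℕ → Submodule ℝ L.Vert
  | 0 => ⊥
  | 1 => ⊥
  | 2 => Submodule.span ℝ {v : L.Vert | ∃ X Y : B.VF, v = L.R X Y}
  | (k + 3) => Ck L (k + 2) ⊔
      Submodule.span ℝ {v : L.Vert | ∃ (X : B.VF) (w : L.Vert),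
        w ∈ Ck L (k + 2) ∧ v = L.nabla X w}

/-- Iterated covariant derivatives `∇_{X_1}∇_{X_2}⋯∇_{X_m}(R(Y,Z))` of curvature
fields. -/
def IterCurv {B : BaseManifold} (L : LandsbergSetting B) : ℕ → Set L.Vert
  | 0 => {v : L.Vert | ∃ Y Z : B.VF, v = L.R Y Z}
  | (m + 1) => {v : L.Vert | ∃ (X : B.VF) (w : L.Vert),
      w ∈ IterCurv L m ∧ v = L.nabla X w}

namespace StmtAux

variable {B : BaseManifold} (L : LandsbergSetting B)

lemma smul_comm' (c : ℝ) (a : L.CfI) (v : L.Vert) : a • c • v = c • a • v := by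
  rw [← algebraMap_smul L.CfI c v, ← algebraMap_smul L.CfI c (a • v),
    smul_smul, smul_smul, mul_comm]

lemma nabla_zero (X : B.VF) : L.nabla X 0 = 0 := by
  have h := L.nabla_addV X 0 0
  rw [add_zero] at h
  exact (left_eq_add.mp h)

lemma brV_zero_right (v : L.Vert) : L.brV v 0 = 0 := by
  have h := L.brV_add_right v 0 0
  rw [add_zero] at h
  exact (left_eq_add.mp h)

lemma ck_le_succ : ∀ k, Ck L k ≤ Ck L (k + 1)
  | 0 => by rw [show Ck L 0 = ⊥ from rfl]; exact bot_le
  | 1 => by rw [show Ck L 1 = ⊥ from rfl]; exact bot_le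
  | (k + 2) => by rw [show Ck L (k + 3) = _ from rfl]; exact le_sup_left

lemma ck_mono {a b : ℕ} (h : a ≤ b) : Ck L a ≤ Ck L b := by
  induction h with
  | refl => exact le_rfl
  | step _ ih => exact ih.trans (ck_le_succ L _)

lemma nabla_mem : ∀ (k : ℕ) (X : B.VF) (v : L.Vert), v ∈ Ck L k →
    L.nabla X v ∈ Ck L (k + 1)
  | 0, X, v, hv => by
      have hv0 : v = 0 := by simpa [Ck] using hv
      subst hv0
      rw [nabla_zero]
      exact zero_mem _
  | 1, X, v, hv => by
      have hv0 : v = 0 := by simpa [Ck] using hv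
      subst hv0
      rw [nabla_zero]
      exact zero_mem _
  | (k + 2), X, v, hv => by
      show L.nabla X v ∈ Ck L (k + 3)
      rw [show Ck L (k + 3) = _ from rfl]
      exact Submodule.mem_sup_right (Submodule.subset_span ⟨X, v, hv, rfl⟩)

/-- Part (1): each `C^k` is a `C^∞(M)`-module. -/
lemma pull_smul_mem : ∀ (k : ℕ) (f : B.Cf) (v : L.Vert), v ∈ Ck L k →
    L.pull f • v ∈ Ck L k
  | 0, f, v, hv => by
      have hv0 : v = 0 := by simpa [Ck] using hv
      subst hv0; rw [smul_zero]; exact zero_mem _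
  | 1, f, v, hv => by
      have hv0 : v = 0 := by simpa [Ck] using hv
      subst hv0; rw [smul_zero]; exact zero_mem _
  | 2, f, v, hv => by
      rw [show Ck L 2 = Submodule.span ℝ {v : L.Vert | ∃ X Y : B.VF, v = L.R X Y}
        from rfl] at hv ⊢
      induction hv using Submodule.span_induction with
      | mem x hx =>
          obtain ⟨X, Y, rfl⟩ := hx
          exact Submodule.subset_span ⟨f • X, Y, (L.R_smul_left f X Y).symm⟩
      | zero => rw [smul_zero]; exact zero_mem _
      | add x y hx hy ihx ihy => rw [smul_add]; exact add_mem ihx ihy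
      | smul c x hx ih => rw [smul_comm' L c (L.pull f) x]; exact Submodule.smul_mem _ _ ih
  | (k + 3), f, v, hv => by
      rw [show Ck L (k + 3) = Ck L (k + 2) ⊔
          Submodule.span ℝ {v : L.Vert | ∃ (X : B.VF) (w : L.Vert),
            w ∈ Ck L (k + 2) ∧ v = L.nabla X w} from rfl] at hv ⊢
      rcases Submodule.mem_sup.mp hv with ⟨w1, h1, w2, h2, rfl⟩
      clear hv
      rw [smul_add]
      refine add_mem (Submodule.mem_sup_left (pull_smul_mem (k + 2) f w1 h1)) ?_
      induction h2 using Submodule.span_induction with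
      | mem x hx =>
          obtain ⟨X, u, hu, rfl⟩ := hx
          have hlb := L.nabla_leibniz X (L.pull f) u
          rw [L.actH_pull] at hlb
          have : L.pull f • L.nabla X u
              = L.nabla X (L.pull f • u) - L.pull (B.actF X f) • u := by
            rw [hlb]; abel
          rw [this]
          refine sub_mem ?_ ?_
          · exact Submodule.mem_sup_right (Submodule.subset_span
              ⟨X, L.pull f • u, pull_smul_mem (k + 2) f u hu, rfl⟩)
          · exact Submodule.mem_sup_left (pull_smul_mem (k + 2) (B.actF X f) u hu)
      | zero => rw [smul_zero]; exact zero_mem _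
      | add x y hx hy ihx ihy => rw [smul_add]; exact add_mem ihx ihy
      | smul c x hx ih => rw [smul_comm' L c (L.pull f) x]; exact Submodule.smul_mem _ _ ih

lemma real_smul_R (c : ℝ) (X Y : B.VF) :
    c • L.R X Y = L.R ((algebraMap ℝ B.Cf c) • X) Y := by
  rw [L.R_smul_left, AlgHom.commutes, algebraMap_smul]

lemma real_smul_nabla (c : ℝ) (X : B.VF) (v : L.Vert) :
    c • L.nabla X v = L.nabla ((algebraMap ℝ B.Cf c) • X) v := by
  rw [L.nabla_smulX, AlgHom.commutes, algebraMap_smul]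

/-- Part (2): `[C^k, C^l] ⊆ C^{k+l}`. -/
lemma brV_mem : ∀ (l k : ℕ) (v w : L.Vert), v ∈ Ck L k → w ∈ Ck L l →
    L.brV v w ∈ Ck L (k + l)
  | 0, k, v, w, hv, hw => by
      have hw0 : w = 0 := by simpa [Ck] using hw
      subst hw0
      rw [brV_zero_right]
      exact zero_mem _
  | 1, k, v, w, hv, hw => by
      have hw0 : w = 0 := by simpa [Ck] using hw
      subst hw0
      rw [brV_zero_right]
      exact zero_mem _
  | 2, k, v, w, hv, hw => by
      rw [show Ck L 2 = Submodule.span ℝ {v : L.Vert | ∃ X Y : B.VF, v = L.R X Y}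
        from rfl] at hw
      have key : ∀ c : ℝ, L.brV v (c • w) ∈ Ck L (k + 2) := by
        induction hw using Submodule.span_induction with
        | mem x hx =>
            intro c
            obtain ⟨X, Y, rfl⟩ := hx
            rw [real_smul_R]
            set X' := (algebraMap ℝ B.Cf c) • X with hX'
            rw [← L.curvId X' Y v]
            refine sub_mem (sub_mem ?_ ?_) ?_
            · exact nabla_mem L (k + 1) X' _ (nabla_mem L k Y v hv)
            · exact nabla_mem L (k + 1) Y _ (nabla_mem L k X' v hv)
            · exact ck_le_succ L (k + 1) (nabla_mem L k (B.bracket X' Y) v hv)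
        | zero => intro c; rw [smul_zero, brV_zero_right]; exact zero_mem _
        | add x y hx hy ihx ihy =>
            intro c; rw [smul_add, L.brV_add_right]; exact add_mem (ihx c) (ihy c)
        | smul a x hx ih => intro c; rw [smul_smul]; exact ih (c * a)
      simpa using key 1
  | (l + 3), k, v, w, hv, hw => by
      rw [show Ck L (l + 3) = Ck L (l + 2) ⊔
          Submodule.span ℝ {v : L.Vert | ∃ (X : B.VF) (u : L.Vert),
            u ∈ Ck L (l + 2) ∧ v = L.nabla X u} from rfl] at hw
      rcases Submodule.mem_sup.mp hw with ⟨w1, h1, w2, h2, rfl⟩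
      clear hw
      rw [L.brV_add_right]
      refine add_mem ?_ ?_
      · exact ck_mono L (by omega) (brV_mem (l + 2) k v w1 hv h1)
      · have key : ∀ c : ℝ, L.brV v (c • w2) ∈ Ck L (k + (l + 3)) := by
          induction h2 using Submodule.span_induction with
          | mem x hx =>
              intro c
              obtain ⟨X, u, hu, rfl⟩ := hx
              rw [real_smul_nabla]
              set X' := (algebraMap ℝ B.Cf c) • X with hX'
              have hb : L.brV v (L.nabla X' u)
                  = L.nabla X' (L.brV v u) - L.brV (L.nabla X' v) u := by
                rw [L.nabla_brV]; abel
              rw [hb]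
              refine sub_mem ?_ ?_
              · exact ck_mono L (by omega)
                  (nabla_mem L (k + (l + 2)) X' _ (brV_mem (l + 2) k v u hv hu))
              · exact ck_mono L (by omega)
                  (brV_mem (l + 2) (k + 1) _ u (nabla_mem L k X' v hv) hu)
          | zero => intro c; rw [smul_zero, brV_zero_right]; exact zero_mem _
          | add x y hx hy ihx ihy =>
              intro c; rw [smul_add, L.brV_add_right]; exact add_mem (ihx c) (ihy c)
          | smul a x hx ih => intro c; rw [smul_smul]; exact ih (c * a)
        simpa using key 1

lemma iterCurv_subset : ∀ m, IterCurv L m ⊆ (Ck L (m + 2) : Set L.Vert)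
  | 0 => by
      intro v hv
      rw [show Ck L 2 = Submodule.span ℝ {v : L.Vert | ∃ X Y : B.VF, v = L.R X Y}
        from rfl]
      exact Submodule.subset_span hv
  | (m + 1) => by
      rintro v ⟨X, w, hw, rfl⟩
      exact nabla_mem L (m + 2) X w (iterCurv_subset m hw)

/-- Part (3). -/
lemma part3 : ∀ m : ℕ, Ck L (m + 2) = Ck L (m + 1) ⊔ Submodule.span ℝ (IterCurv L m) := by
  intro m
  induction m with
  | zero =>
      rw [show Ck L 1 = ⊥ from rfl, bot_sup_eq]
      rfl
  | succ m ih =>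
      apply le_antisymm
      · rw [show Ck L (m + 3) = Ck L (m + 2) ⊔
            Submodule.span ℝ {v : L.Vert | ∃ (X : B.VF) (w : L.Vert),
              w ∈ Ck L (m + 2) ∧ v = L.nabla X w} from rfl]
        refine sup_le le_sup_left (Submodule.span_le.mpr ?_)
        rintro x ⟨X, w, hw, rfl⟩
        rw [ih] at hw
        rcases Submodule.mem_sup.mp hw with ⟨w1, h1, w2, h2, rfl⟩
        clear hw
        rw [L.nabla_addV]
        refine add_mem (Submodule.mem_sup_left (nabla_mem L (m + 1) X w1 h1)) ?_
        induction h2 using Submodule.span_induction with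
        | mem u hu =>
            exact Submodule.mem_sup_right (Submodule.subset_span ⟨X, u, hu, rfl⟩)
        | zero => rw [nabla_zero]; exact zero_mem _
        | add x y hx hy ihx ihy => rw [L.nabla_addV]; exact add_mem ihx ihy
        | smul c u hu ihu =>
            have e1 : (algebraMap ℝ L.CfI c) • u = c • u := algebraMap_smul _ c u
            have e2 : (algebraMap ℝ L.CfI c) • L.nabla X u = c • L.nabla X u :=
              algebraMap_smul _ c _
            have e3 : L.actH X (algebraMap ℝ L.CfI c)
                = L.pull (B.actF X (algebraMap ℝ B.Cf c)) := by
              rw [← L.pull.commutes c, L.actH_pull]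
            have hlb : L.nabla X (c • u) = c • L.nabla X u
                + L.pull (B.actF X (algebraMap ℝ B.Cf c)) • u := by
              rw [← e1, L.nabla_leibniz, e2, e3]
            rw [hlb]
            refine add_mem (Submodule.smul_mem _ _ ihu) ?_
            have hu' : u ∈ Ck L (m + 2) :=
              (Submodule.span_le.mpr (iterCurv_subset L m)) hu
            exact Submodule.mem_sup_left (pull_smul_mem L (m + 2) _ u hu')
      · refine sup_le (ck_le_succ L (m + 2)) (Submodule.span_le.mpr ?_)
        rintro x ⟨X, w, hw, rfl⟩
        rw [show Ck L (m + 3) = Ck L (m + 2) ⊔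
            Submodule.span ℝ {v : L.Vert | ∃ (X : B.VF) (w : L.Vert),
              w ∈ Ck L (m + 2) ∧ v = L.nabla X w} from rfl]
        exact Submodule.mem_sup_right (Submodule.subset_span
          ⟨X, w, iterCurv_subset L m hw, rfl⟩)

end StmtAux

/-- (1) each `C^k` is a `C^∞(M)`-module; (2) `[C^k, C^l] ⊂ C^{k+l}`;
(3) `C^1 = 0` and, modulo `C^{m+1}`, the space `C^{m+2}` is spanned by the fields
`∇_{X_1}∇_{X_2}⋯∇_{X_m}(R(Y,Z))` (stated as the equality
`C^{m+2} = C^{m+1} ⊔ span ℝ (IterCurv m)`, which says exactly that the quotient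
`C^{m+2}/C^{m+1}` is spanned by the classes of these fields). -/
theorem stmt8 (B : BaseManifold) (L : LandsbergSetting B) :
    -- (1) each `C^k` is a `C^∞(M)`-module
    (∀ (k : ℕ) (f : B.Cf) (v : L.Vert), v ∈ Ck L k → L.pull f • v ∈ Ck L k) ∧
    -- (2) `[C^k, C^l] ⊂ C^{k+l}`
    (∀ (k l : ℕ) (v w : L.Vert), v ∈ Ck L k → w ∈ Ck L l →
        L.brV v w ∈ Ck L (k + l)) ∧
    -- (3) `C^{m+2}/C^{m+1}` is spanned by iterated derivatives of curvature fields
    (Ck L 1 = ⊥) ∧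
    (∀ m : ℕ, Ck L (m + 2) = Ck L (m + 1) ⊔ Submodule.span ℝ (IterCurv L m)) := by
  exact ⟨fun k f v hv => StmtAux.pull_smul_mem L k f v hv,
    fun k l v w hv hw => StmtAux.brV_mem L l k v w hv hw,
    rfl,
    StmtAux.part3 L⟩
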